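/- Fix dimensions n, p, m. Let A : ℝ^n → ℝ^n, B an n×p real matrix, C : ℝ^n → ℝ^m, R an m×m symmetric positive definite matrix, Q_η a p×p symmetric positive definite matrix, and y ∈ ℝ^m a fixed measurement. Suppose: (i) there is a nonempty finite index set I₀ and for each i ∈ I₀ a symmetric (n+1)×(n+1) matrix Q^{v,0}_i whose upper-left n×n block N_i is positive semidefinite, such that V₀(x) = min_{i∈I₀} (1/2)[xᵀ 1] Q^{v,0}_i [x; 1] for all x ∈ ℝ^n; (ii) there is a nonempty finite family of symmetric (n+1)×(n+1) matrices Q^{c}_j, j ∈ J, such that −yᵀ R C(x) = min_{j∈J} [xᵀ 1] Q^{c}_j [x; 1] for all x; (iii) there is a nonempty finite family of symmetric (n+1)×(n+1) matrices Q^{b}_ℓ, ℓ ∈ L, such that C(x)ᵀ R C(x) = min_{ℓ∈L} [xᵀ 1] Q^{b}_ℓ [x; 1] for all x; (iv) for every n×n symmetric positive semidefinite matrix M there is a nonempty finite family of symmetric (n+1)×(n+1) matrices Q^{a}(M)_s such that A(x)ᵀ M A(x) = min_s [xᵀ 1] Q^{a}(M)_s [x; 1] for all x; and (v) for every row vector M̃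 ∈ ℝ^{1×n} there is a nonempty finite family of symmetric (n+1)×(n+1) matrices Q^{ã}(M̃)_t such that M̃ A(x) = min_t [xᵀ 1] Q^{ã}(M̃)_t [x; 1] for all x. Define V₁ : ℝ^n → ℝ by V₁(x) = ⨅_{w ∈ ℝ^p} ( V₀(A(x) + B w) + (1/2) wᵀ Q_η w + (1/2)(y − C(x))ᵀ R (y − C(x)) ). Then there exist a nonempty finite index set I₁ and symmetric (n+1)×(n+1) matrices Q^{v,1}_k, k ∈ I₁, such that V₁(x) = min_{k∈I₁} (1/2)[xᵀ 1] Q^{v,1}_k [x; 1] for all x ∈ ℝ^n. -/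

import Mathlib

open Matrix

/-- The vector `x` augmented by a final entry `1`, i.e. `[x; 1] ∈ ℝ^{n+1}`. -/
noncomputable def augVec {n : ℕ} (x : Fin n → ℝ) : Fin (n + 1) → ℝ :=
  Fin.snoc x 1

/-- The quadratic form `[xᵀ 1] Q [x; 1]` for an `(n+1)×(n+1)` matrix `Q`. -/
noncomputable def augQuadForm {n : ℕ} (Q : Matrix (Fin (n + 1)) (Fin (n + 1)) ℝ)
    (x : Fin n → ℝ) : ℝ :=
  augVec x ⬝ᵥ Q.mulVec (augVec x)

section InfHelpers

lemma fin_iInf_min {ι : Type*} [Finite ι] [Nonempty ι] (f : ι → ℝ) :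
    ∃ i, (⨅ j, f j) = f i ∧ ∀ j, f i ≤ f j := by
  obtain ⟨i, hi⟩ := Finite.exists_min f
  exact ⟨i, le_antisymm (ciInf_le (Set.finite_range f).bddBelow i) (le_ciInf hi), hi⟩

lemma iInf_congr' {ι : Sort*} (f g : ι → ℝ) (h : ∀ i, f i = g i) : ⨅ i, f i = ⨅ i, g i := by
  exact congrArg iInf (funext h)

lemma iInf_add_iInf_fin {ι κ : Type*} [Finite ι] [Nonempty ι] [Finite κ] [Nonempty κ]
    (f : ι → ℝ) (g : κ → ℝ) :
    (⨅ i, f i) + ⨅ j, g j = ⨅ q : ι × κ, (f q.1 + g q.2) := by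
  obtain ⟨i0, hi0, hif⟩ := fin_iInf_min f
  obtain ⟨j0, hj0, hjf⟩ := fin_iInf_min g
  obtain ⟨q0, hq0, hqf⟩ := fin_iInf_min (fun q : ι × κ => f q.1 + g q.2)
  rw [hi0, hj0, hq0]
  exact le_antisymm (add_le_add (hif q0.1) (hjf q0.2)) (hqf (i0, j0))

lemma iInf_add_const_fin {ι : Type*} [Finite ι] [Nonempty ι] (f : ι → ℝ) (a : ℝ) :
    (⨅ i, f i) + a = ⨅ i, (f i + a) := by
  obtain ⟨i0, hi0, hif⟩ := fin_iInf_min f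
  obtain ⟨i1, hi1, hif1⟩ := fin_iInf_min (fun i => f i + a)
  rw [hi0, hi1]
  exact le_antisymm (by linarith [hif i1]) (by linarith [hif1 i0])

lemma mul_iInf_fin {ι : Type*} [Finite ι] [Nonempty ι] (c : ℝ) (hc : 0 ≤ c) (f : ι → ℝ) :
    c * (⨅ i, f i) = ⨅ i, c * f i := by
  obtain ⟨i0, hi0, hif⟩ := fin_iInf_min f
  obtain ⟨i1, hi1, hif1⟩ := fin_iInf_min (fun i => c * f i)
  rw [hi0, hi1]
  exact le_antisymm (mul_le_mul_of_nonneg_left (hif i1) hc)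
    (hif1 i0)

lemma iInf_sigma_fin {ι : Type*} [Finite ι] [Nonempty ι] {κ : ι → Type*}
    [∀ i, Finite (κ i)] [∀ i, Nonempty (κ i)] (f : (Σ i, κ i) → ℝ) :

    (⨅ i, ⨅ j, f ⟨i, j⟩) = ⨅ σ, f σ := by
  have : Nonempty (Σ i, κ i) := ⟨⟨Classical.arbitrary ι, Classical.arbitrary _⟩⟩
  obtain ⟨σ0, hσ0, hσf⟩ := fin_iInf_min f
  obtain ⟨i0, hi0, hif⟩ := fin_iInf_min (fun i => ⨅ j, f ⟨i, j⟩)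
  obtain ⟨j0, hj0, _⟩ := fin_iInf_min (fun j => f ⟨i0, j⟩)
  rw [hσ0, hi0, hj0]
  refine le_antisymm ?_ (hσf _)
  refine ge_iff_le.mp ?_
  calc f σ0 = f ⟨σ0.1, σ0.2⟩ := by rfl
    _ ≥ ⨅ j, f ⟨σ0.1, j⟩ := ciInf_le (Set.finite_range _).bddBelow _
    _ ≥ ⨅ j, f ⟨i0, j⟩ := hif σ0.1
    _ = f ⟨i0, j0⟩ := hj0

lemma iInf_swap_fin {ι : Type*} [Finite ι] [Nonempty ι] {W : Type*} [Nonempty W]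
    (f : ι → W → ℝ) (m : ι → ℝ) (hm : ∀ i w, m i ≤ f i w) :
    (⨅ w, ⨅ i, f i w) = ⨅ i, ⨅ w, f i w := by
  have hbdd : ∀ i, BddBelow (Set.range (f i)) := fun i =>
    ⟨m i, by rintro _ ⟨w, rfl⟩; exact hm i w⟩
  obtain ⟨im, _, himf⟩ := fin_iInf_min m
  have hbdd2 : BddBelow (Set.range fun w => ⨅ i, f i w) := by
    refine ⟨m im, ?_⟩
    rintro _ ⟨w, rfl⟩
    obtain ⟨iw, hiw, _⟩ := fin_iInf_min (fun i => f i w)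
    simp only []
    rw [hiw]; exact le_trans (himf iw) (hm iw w)
  refine le_antisymm (le_ciInf fun i => le_ciInf fun w => ?_) (le_ciInf fun w => ?_)
  · exact le_trans (ciInf_le hbdd2 w) (ciInf_le (Set.finite_range _).bddBelow i)
  · obtain ⟨iw, hiw, _⟩ := fin_iInf_min (fun i => f i w)
    rw [hiw]
    exact le_trans (ciInf_le (Set.finite_range _).bddBelow iw) (ciInf_le (hbdd iw) w)

end InfHelpers

section CoreHelpers
variable {q r : ℕ}

lemma isSymm_of_isHermitian {M : Matrix (Fin q) (Fin q) ℝ} (h : M.IsHermitian) : M.IsSymm := by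
  rw [Matrix.IsSymm, ← Matrix.conjTranspose_eq_transpose_of_trivial]; exact h

lemma dot_mulVec_symm (M : Matrix (Fin q) (Fin q) ℝ) (hM : M.IsSymm) (u v : Fin q → ℝ) :
    u ⬝ᵥ M *ᵥ v = (M *ᵥ u) ⬝ᵥ v := by
  rw [dotProduct_mulVec, ← Matrix.mulVec_transpose, hM.eq]

lemma dot_symm_comm (M : Matrix (Fin q) (Fin q) ℝ) (hM : M.IsSymm) (u v : Fin q → ℝ) :
    u ⬝ᵥ M *ᵥ v = v ⬝ᵥ M *ᵥ u := by
  rw [dot_mulVec_symm M hM, dotProduct_comm, dot_mulVec_symm M hM]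

lemma dot_transpose (B : Matrix (Fin q) (Fin r) ℝ) (u : Fin q → ℝ) (w : Fin r → ℝ) :
    u ⬝ᵥ B *ᵥ w = (Bᵀ *ᵥ u) ⬝ᵥ w := by
  rw [dotProduct_mulVec, Matrix.mulVec_transpose]

lemma mulVec_dot (B : Matrix (Fin q) (Fin r) ℝ) (w : Fin r → ℝ) (t : Fin q → ℝ) :
    (B *ᵥ w) ⬝ᵥ t = (Bᵀ *ᵥ t) ⬝ᵥ w := by
  rw [dotProduct_comm, dot_transpose]

end CoreHelpers

lemma psd_nonneg {M : Matrix (Fin q) (Fin q) ℝ} (h : M.PosSemidef) (u : Fin q → ℝ) :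
    0 ≤ u ⬝ᵥ M *ᵥ u := by
  have := h.dotProduct_mulVec_nonneg u
  rwa [show star u = u from funext fun _ => star_trivial _] at this

lemma quad_min {p : ℕ} (S : Matrix (Fin p) (Fin p) ℝ) (hS : S.PosDef) (v : Fin p → ℝ) (c : ℝ) :
    (∀ w, c - (1/2) * (v ⬝ᵥ S⁻¹ *ᵥ v) ≤ (1/2) * (w ⬝ᵥ S *ᵥ w) + v ⬝ᵥ w + c) ∧
    (⨅ w : Fin p → ℝ, ((1/2) * (w ⬝ᵥ S *ᵥ w) + v ⬝ᵥ w + c)) = c - (1/2) * (v ⬝ᵥ S⁻¹ *ᵥ v) := by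
  have hSsymm : S.IsSymm := isSymm_of_isHermitian hS.isHermitian
  have hinv : S * S⁻¹ = 1 := Matrix.mul_nonsing_inv S ((Matrix.isUnit_iff_isUnit_det S).mp hS.isUnit)
  set w₀ : Fin p → ℝ := -(S⁻¹ *ᵥ v) with hw₀
  have h1 : S *ᵥ w₀ = -v := by
    rw [hw₀, Matrix.mulVec_neg, Matrix.mulVec_mulVec, hinv, Matrix.one_mulVec]
  have key : ∀ w, (1/2) * (w ⬝ᵥ S *ᵥ w) + v ⬝ᵥ w + c
      = (1/2) * ((w - w₀) ⬝ᵥ S *ᵥ (w - w₀)) + (c - (1/2) * (v ⬝ᵥ S⁻¹ *ᵥ v)) := by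
    intro w
    have e1 : (w - w₀) ⬝ᵥ S *ᵥ (w - w₀)
        = w ⬝ᵥ S *ᵥ w - w ⬝ᵥ S *ᵥ w₀ - w₀ ⬝ᵥ S *ᵥ w + w₀ ⬝ᵥ S *ᵥ w₀ := by
      rw [Matrix.mulVec_sub, dotProduct_sub, sub_dotProduct, sub_dotProduct]
      ring
    have e2 : w ⬝ᵥ S *ᵥ w₀ = -(v ⬝ᵥ w) := by
      rw [h1, dotProduct_neg, dotProduct_comm]
    have e3 : w₀ ⬝ᵥ S *ᵥ w = -(v ⬝ᵥ w) := by
      rw [dot_mulVec_symm S hSsymm, h1, neg_dotProduct]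
    have e4 : w₀ ⬝ᵥ S *ᵥ w₀ = v ⬝ᵥ S⁻¹ *ᵥ v := by
      rw [h1, hw₀, neg_dotProduct, dotProduct_neg, neg_neg, dotProduct_comm]
    rw [e1, e2, e3, e4]; ring
  have hnn : ∀ w, 0 ≤ (w - w₀) ⬝ᵥ S *ᵥ (w - w₀) := fun w => psd_nonneg hS.posSemidef _
  have hlb : ∀ w, c - (1/2) * (v ⬝ᵥ S⁻¹ *ᵥ v) ≤ (1/2) * (w ⬝ᵥ S *ᵥ w) + v ⬝ᵥ w + c := by
    intro w; rw [key w]; nlinarith [hnn w]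
  refine ⟨hlb, le_antisymm ?_ (le_ciInf hlb)⟩
  have hval : (1/2) * (w₀ ⬝ᵥ S *ᵥ w₀) + v ⬝ᵥ w₀ + c = c - (1/2) * (v ⬝ᵥ S⁻¹ *ᵥ v) := by
    rw [key w₀]; simp
  calc (⨅ w : Fin p → ℝ, ((1/2) * (w ⬝ᵥ S *ᵥ w) + v ⬝ᵥ w + c))
      ≤ (1/2) * (w₀ ⬝ᵥ S *ᵥ w₀) + v ⬝ᵥ w₀ + c :=
        ciInf_le ⟨c - (1/2) * (v ⬝ᵥ S⁻¹ *ᵥ v), by rintro _ ⟨w, rfl⟩; exact hlb w⟩ w₀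
    _ = c - (1/2) * (v ⬝ᵥ S⁻¹ *ᵥ v) := hval


lemma augQuadForm_add (P Q : Matrix (Fin (n + 1)) (Fin (n + 1)) ℝ) (x : Fin n → ℝ) :
    augQuadForm (P + Q) x = augQuadForm P x + augQuadForm Q x := by
  simp [augQuadForm, Matrix.add_mulVec, dotProduct_add]

lemma augQuadForm_smul (c : ℝ) (Q : Matrix (Fin (n + 1)) (Fin (n + 1)) ℝ) (x : Fin n → ℝ) :
    augQuadForm (c • Q) x = c * augQuadForm Q x := by
  simp [augQuadForm, Matrix.smul_mulVec, dotProduct_smul, smul_eq_mul]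

noncomputable def cornerMat (n : ℕ) (c : ℝ) : Matrix (Fin (n + 1)) (Fin (n + 1)) ℝ :=
  fun a b => if a = Fin.last n ∧ b = Fin.last n then c else 0

lemma cornerMat_isSymm (c : ℝ) : (cornerMat n c).IsSymm := by
  ext a b
  simp only [cornerMat, Matrix.transpose_apply]
  by_cases h1 : a = Fin.last n <;> by_cases h2 : b = Fin.last n <;> simp [h1, h2]

lemma augQuadForm_corner (c : ℝ) (x : Fin n → ℝ) : augQuadForm (cornerMat n c) x = c := by
  have hmv : ∀ u : Fin (n+1) → ℝ, (cornerMat n c) *ᵥ u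
      = fun a => if a = Fin.last n then c * u (Fin.last n) else 0 := by
    intro u; funext a
    by_cases h : a = Fin.last n <;>
      simp [Matrix.mulVec, cornerMat, dotProduct, h, Finset.sum_ite_eq', mul_comm]
  rw [augQuadForm, hmv, dotProduct]
  rw [Fin.sum_univ_castSucc]
  have hne : ∀ j : Fin n, (Fin.castSucc j : Fin (n+1)) ≠ Fin.last n :=
    fun j => (Fin.castSucc_lt_last j).ne
  simp [augVec, Fin.snoc_castSucc, Fin.snoc_last, hne]

lemma augQuadForm_expand (Q : Matrix (Fin (n + 1)) (Fin (n + 1)) ℝ) (hQ : Q.IsSymm)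
    (x : Fin n → ℝ) :
    augQuadForm Q x = x ⬝ᵥ (Q.submatrix Fin.castSucc Fin.castSucc) *ᵥ x
      + 2 * ((fun j => Q (Fin.castSucc j) (Fin.last n)) ⬝ᵥ x) + Q (Fin.last n) (Fin.last n) := by
  have hsym : ∀ j, Q (Fin.last n) (Fin.castSucc j) = Q (Fin.castSucc j) (Fin.last n) :=
    fun j => hQ.apply _ _
  have hmv : ∀ a : Fin (n+1), (Q *ᵥ augVec x) a
      = (∑ k : Fin n, Q a (Fin.castSucc k) * x k) + Q a (Fin.last n) := by
    intro a
    rw [Matrix.mulVec, dotProduct, Fin.sum_univ_castSucc]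
    simp [augVec, Fin.snoc_castSucc, Fin.snoc_last]
  rw [augQuadForm, dotProduct, Fin.sum_univ_castSucc]
  simp only [hmv]
  simp only [augVec, Fin.snoc_castSucc, Fin.snoc_last, one_mul]
  have hrhs : x ⬝ᵥ (Q.submatrix Fin.castSucc Fin.castSucc) *ᵥ x
      = ∑ j : Fin n, x j * ∑ k : Fin n, Q (Fin.castSucc j) (Fin.castSucc k) * x k := by
    simp [dotProduct, Matrix.mulVec, Matrix.submatrix_apply]
  have hlin : (fun j => Q (Fin.castSucc j) (Fin.last n)) ⬝ᵥ x
      = ∑ j : Fin n, Q (Fin.castSucc j) (Fin.last n) * x j := rfl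
  rw [hrhs, hlin]
  have h1 : ∑ j : Fin n, x j * ((∑ k : Fin n, Q (Fin.castSucc j) (Fin.castSucc k) * x k)
        + Q (Fin.castSucc j) (Fin.last n))
      = (∑ j : Fin n, x j * ∑ k : Fin n, Q (Fin.castSucc j) (Fin.castSucc k) * x k)
        + ∑ j : Fin n, x j * Q (Fin.castSucc j) (Fin.last n) := by
    rw [← Finset.sum_add_distrib]
    exact Finset.sum_congr rfl fun j _ => by ring
  have h2 : ∑ k : Fin n, Q (Fin.last n) (Fin.castSucc k) * x k
      = ∑ k : Fin n, Q (Fin.castSucc k) (Fin.last n) * x k :=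
    Finset.sum_congr rfl fun k _ => by rw [hsym]
  have h3 : ∑ j : Fin n, x j * Q (Fin.castSucc j) (Fin.last n)
      = ∑ j : Fin n, Q (Fin.castSucc j) (Fin.last n) * x j :=
    Finset.sum_congr rfl fun j _ => by ring
  rw [h1, h2, h3]
  ring


lemma triple_quad {q : ℕ} (N K : Matrix (Fin q) (Fin q) ℝ) (hN : N.IsSymm) (z : Fin q → ℝ) :
    z ⬝ᵥ (N * K * N) *ᵥ z = (N *ᵥ z) ⬝ᵥ K *ᵥ (N *ᵥ z) := by
  rw [← Matrix.mulVec_mulVec, ← Matrix.mulVec_mulVec, dot_mulVec_symm N hN]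

lemma sandwich_dot {q r : ℕ} (B : Matrix (Fin q) (Fin r) ℝ) (S : Matrix (Fin r) (Fin r) ℝ)
    (u : Fin q → ℝ) :
    (Bᵀ *ᵥ u) ⬝ᵥ S *ᵥ (Bᵀ *ᵥ u) = u ⬝ᵥ (B * S * Bᵀ) *ᵥ u := by
  rw [mulVec_dot, Matrix.transpose_transpose]
  simp only [Matrix.mulVec_mulVec]
  rw [← Matrix.mul_assoc, dotProduct_comm]

lemma core_min {n p : ℕ} (B : Matrix (Fin n) (Fin p) ℝ) (Qη : Matrix (Fin p) (Fin p) ℝ)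
    (hQη : Qη.PosDef) (N : Matrix (Fin n) (Fin n) ℝ) (hNpsd : N.PosSemidef)
    (b z : Fin n → ℝ) (c : ℝ) :
    (∀ w : Fin p → ℝ,
      (1/2) * (z ⬝ᵥ (N - N * (B * (Bᵀ * N * B + Qη)⁻¹ * Bᵀ) * N) *ᵥ z)
        + (b - N *ᵥ ((B * (Bᵀ * N * B + Qη)⁻¹ * Bᵀ) *ᵥ b)) ⬝ᵥ z
        + (c - (1/2) * (b ⬝ᵥ (B * (Bᵀ * N * B + Qη)⁻¹ * Bᵀ) *ᵥ b))
      ≤ (1/2) * ((z + B *ᵥ w) ⬝ᵥ N *ᵥ (z + B *ᵥ w)) + b ⬝ᵥ (z + B *ᵥ w)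
        + (1/2) * (w ⬝ᵥ Qη *ᵥ w) + c) ∧
    (⨅ w : Fin p → ℝ, ((1/2) * ((z + B *ᵥ w) ⬝ᵥ N *ᵥ (z + B *ᵥ w)) + b ⬝ᵥ (z + B *ᵥ w)
        + (1/2) * (w ⬝ᵥ Qη *ᵥ w) + c))
      = (1/2) * (z ⬝ᵥ (N - N * (B * (Bᵀ * N * B + Qη)⁻¹ * Bᵀ) * N) *ᵥ z)
        + (b - N *ᵥ ((B * (Bᵀ * N * B + Qη)⁻¹ * Bᵀ) *ᵥ b)) ⬝ᵥ z
        + (c - (1/2) * (b ⬝ᵥ (B * (Bᵀ * N * B + Qη)⁻¹ * Bᵀ) *ᵥ b)) := by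
  have hNsym : N.IsSymm := isSymm_of_isHermitian hNpsd.isHermitian
  set S : Matrix (Fin p) (Fin p) ℝ := Bᵀ * N * B + Qη with hSdef
  have hBNB : (Bᵀ * N * B).PosSemidef := by
    have := hNpsd.conjTranspose_mul_mul_same B
    rwa [Matrix.conjTranspose_eq_transpose_of_trivial] at this
  have hSpos : S.PosDef := Matrix.PosDef.posSemidef_add hBNB hQη
  set K : Matrix (Fin n) (Fin n) ℝ := B * S⁻¹ * Bᵀ with hKdef
  have hSinvsym : S⁻¹.IsSymm := isSymm_of_isHermitian hSpos.inv.isHermitian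
  have hKsym : K.IsSymm := by
    rw [Matrix.IsSymm, hKdef, Matrix.transpose_mul, Matrix.transpose_mul,
      Matrix.transpose_transpose, hSinvsym.eq, Matrix.mul_assoc]
  set v : Fin p → ℝ := Bᵀ *ᵥ (N *ᵥ z + b) with hvdef
  set c₀ : ℝ := (1/2) * (z ⬝ᵥ N *ᵥ z) + b ⬝ᵥ z + c with hc₀def
  -- pointwise identity
  have hpt : ∀ w : Fin p → ℝ,
      (1/2) * ((z + B *ᵥ w) ⬝ᵥ N *ᵥ (z + B *ᵥ w)) + b ⬝ᵥ (z + B *ᵥ w)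
        + (1/2) * (w ⬝ᵥ Qη *ᵥ w) + c
      = (1/2) * (w ⬝ᵥ S *ᵥ w) + v ⬝ᵥ w + c₀ := by
    intro w
    have e1 : (z + B *ᵥ w) ⬝ᵥ N *ᵥ (z + B *ᵥ w)
        = z ⬝ᵥ N *ᵥ z + z ⬝ᵥ N *ᵥ (B *ᵥ w) + (B *ᵥ w) ⬝ᵥ N *ᵥ z
          + (B *ᵥ w) ⬝ᵥ N *ᵥ (B *ᵥ w) := by
      simp only [Matrix.mulVec_add, dotProduct_add, add_dotProduct]
      ring
    have e2 : z ⬝ᵥ N *ᵥ (B *ᵥ w) = (Bᵀ *ᵥ (N *ᵥ z)) ⬝ᵥ w := by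
      rw [dot_mulVec_symm N hNsym, dot_transpose]
    have e3 : (B *ᵥ w) ⬝ᵥ N *ᵥ z = (Bᵀ *ᵥ (N *ᵥ z)) ⬝ᵥ w := by
      rw [dot_symm_comm N hNsym, e2]
    have e4 : (B *ᵥ w) ⬝ᵥ N *ᵥ (B *ᵥ w) = w ⬝ᵥ (Bᵀ * N * B) *ᵥ w := by
      rw [mulVec_dot, Matrix.mulVec_mulVec, Matrix.mulVec_mulVec, dotProduct_comm,
        dot_transpose]
    have e5 : b ⬝ᵥ (z + B *ᵥ w) = b ⬝ᵥ z + (Bᵀ *ᵥ b) ⬝ᵥ w := by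
      rw [dotProduct_add, dot_transpose]
    have e6 : w ⬝ᵥ S *ᵥ w = w ⬝ᵥ (Bᵀ * N * B) *ᵥ w + w ⬝ᵥ Qη *ᵥ w := by
      rw [hSdef, Matrix.add_mulVec, dotProduct_add]
    have e7 : v ⬝ᵥ w = (Bᵀ *ᵥ (N *ᵥ z)) ⬝ᵥ w + (Bᵀ *ᵥ b) ⬝ᵥ w := by
      rw [hvdef, Matrix.mulVec_add, add_dotProduct]
    rw [e1, e2, e3, e4, e5, e6, e7, hc₀def]; ring
  obtain ⟨hlb, hval⟩ := quad_min S hSpos v c₀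
  -- value identity
  have hvv : v ⬝ᵥ S⁻¹ *ᵥ v = (N *ᵥ z + b) ⬝ᵥ K *ᵥ (N *ᵥ z + b) := by
    rw [hvdef, sandwich_dot, hKdef]
  have hexp : (N *ᵥ z + b) ⬝ᵥ K *ᵥ (N *ᵥ z + b)
      = z ⬝ᵥ (N * K * N) *ᵥ z + 2 * ((N *ᵥ (K *ᵥ b)) ⬝ᵥ z) + b ⬝ᵥ K *ᵥ b := by
    have f1 : (N *ᵥ z + b) ⬝ᵥ K *ᵥ (N *ᵥ z + b)
        = (N *ᵥ z) ⬝ᵥ K *ᵥ (N *ᵥ z) + (N *ᵥ z) ⬝ᵥ K *ᵥ b + b ⬝ᵥ K *ᵥ (N *ᵥ z)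
          + b ⬝ᵥ K *ᵥ b := by
      simp only [Matrix.mulVec_add, dotProduct_add, add_dotProduct]
      ring
    have f2 : (N *ᵥ z) ⬝ᵥ K *ᵥ (N *ᵥ z) = z ⬝ᵥ (N * K * N) *ᵥ z := by
      exact (triple_quad N K hNsym z).symm
    have f3 : b ⬝ᵥ K *ᵥ (N *ᵥ z) = (N *ᵥ (K *ᵥ b)) ⬝ᵥ z := by
      rw [dot_mulVec_symm K hKsym, dot_mulVec_symm N hNsym]
    have f4 : (N *ᵥ z) ⬝ᵥ K *ᵥ b = (N *ᵥ (K *ᵥ b)) ⬝ᵥ z := by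
      rw [dot_symm_comm K hKsym, f3]
    rw [f1, f2, f3, f4]; ring
  have hrhs : c₀ - (1/2) * (v ⬝ᵥ S⁻¹ *ᵥ v)
      = (1/2) * (z ⬝ᵥ (N - N * K * N) *ᵥ z) + (b - N *ᵥ (K *ᵥ b)) ⬝ᵥ z
        + (c - (1/2) * (b ⬝ᵥ K *ᵥ b)) := by
    rw [hvv, hexp, hc₀def, Matrix.sub_mulVec, dotProduct_sub, sub_dotProduct]
    ring
  constructor
  · intro w; rw [hpt w, ← hrhs]; exact hlb w
  · rw [iInf_congr' _ _ hpt, hval, hrhs]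

section Defs
variable {n p : ℕ}

noncomputable def Kmat (B : Matrix (Fin n) (Fin p) ℝ) (Qη : Matrix (Fin p) (Fin p) ℝ)
    (N : Matrix (Fin n) (Fin n) ℝ) : Matrix (Fin n) (Fin n) ℝ :=
  B * (Bᵀ * N * B + Qη)⁻¹ * Bᵀ

noncomputable def Mmat (B : Matrix (Fin n) (Fin p) ℝ) (Qη : Matrix (Fin p) (Fin p) ℝ)
    (N : Matrix (Fin n) (Fin n) ℝ) : Matrix (Fin n) (Fin n) ℝ :=
  N - N * Kmat B Qη N * N

noncomputable def mvec (B : Matrix (Fin n) (Fin p) ℝ) (Qη : Matrix (Fin p) (Fin p) ℝ)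
    (N : Matrix (Fin n) (Fin n) ℝ) (b : Fin n → ℝ) : Fin n → ℝ :=
  b - N *ᵥ (Kmat B Qη N *ᵥ b)

lemma core_min' (B : Matrix (Fin n) (Fin p) ℝ) (Qη : Matrix (Fin p) (Fin p) ℝ)
    (hQη : Qη.PosDef) (N : Matrix (Fin n) (Fin n) ℝ) (hNpsd : N.PosSemidef)
    (b z : Fin n → ℝ) (c : ℝ) :
    (∀ w : Fin p → ℝ,
      (1/2) * (z ⬝ᵥ Mmat B Qη N *ᵥ z) + mvec B Qη N b ⬝ᵥ z
        + (c - (1/2) * (b ⬝ᵥ Kmat B Qη N *ᵥ b))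
      ≤ (1/2) * ((z + B *ᵥ w) ⬝ᵥ N *ᵥ (z + B *ᵥ w)) + b ⬝ᵥ (z + B *ᵥ w)
        + (1/2) * (w ⬝ᵥ Qη *ᵥ w) + c) ∧
    (⨅ w : Fin p → ℝ, ((1/2) * ((z + B *ᵥ w) ⬝ᵥ N *ᵥ (z + B *ᵥ w)) + b ⬝ᵥ (z + B *ᵥ w)
        + (1/2) * (w ⬝ᵥ Qη *ᵥ w) + c))
      = (1/2) * (z ⬝ᵥ Mmat B Qη N *ᵥ z) + mvec B Qη N b ⬝ᵥ z
        + (c - (1/2) * (b ⬝ᵥ Kmat B Qη N *ᵥ b)) := by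
  have := core_min B Qη hQη N hNpsd b z c
  rw [Mmat, mvec, Kmat]
  exact this

lemma Mmat_posSemidef (B : Matrix (Fin n) (Fin p) ℝ) (Qη : Matrix (Fin p) (Fin p) ℝ)
    (hQη : Qη.PosDef) (N : Matrix (Fin n) (Fin n) ℝ) (hNpsd : N.PosSemidef) :
    (Mmat B Qη N).PosSemidef := by
  have hNsym : N.IsSymm := isSymm_of_isHermitian hNpsd.isHermitian
  have hBNB : (Bᵀ * N * B).PosSemidef := by
    have := hNpsd.conjTranspose_mul_mul_same B
    rwa [Matrix.conjTranspose_eq_transpose_of_trivial] at this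
  have hSpos : (Bᵀ * N * B + Qη).PosDef := Matrix.PosDef.posSemidef_add hBNB hQη
  have hSinvsym : (Bᵀ * N * B + Qη)⁻¹.IsSymm := isSymm_of_isHermitian hSpos.inv.isHermitian
  have hKsym : (Kmat B Qη N).IsSymm := by
    rw [Matrix.IsSymm, Kmat, Matrix.transpose_mul, Matrix.transpose_mul,
      Matrix.transpose_transpose, hSinvsym.eq, Matrix.mul_assoc]
    exact (Matrix.mul_assoc _ _ _).symm
  refine Matrix.posSemidef_iff_dotProduct_mulVec.mpr ⟨?_, ?_⟩
  · rw [Matrix.IsHermitian, Matrix.conjTranspose_eq_transpose_of_trivial]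
    rw [Mmat, Matrix.transpose_sub, hNsym.eq, Matrix.transpose_mul, Matrix.transpose_mul,
      hNsym.eq, hKsym.eq, Matrix.mul_assoc]
  · intro u
    rw [show star u = u from funext fun _ => star_trivial _]
    have h := (core_min' B Qη hQη N hNpsd 0 u 0).2
    simp only [Matrix.mulVec_zero, dotProduct_zero, zero_dotProduct, mvec, sub_zero,
      zero_sub, mul_zero, neg_zero, add_zero] at h
    have hnn : 0 ≤ ⨅ w : Fin p → ℝ, (1/2 * ((u + B *ᵥ w) ⬝ᵥ N *ᵥ (u + B *ᵥ w))
        + 1/2 * (w ⬝ᵥ Qη *ᵥ w)) := by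
      refine Real.iInf_nonneg fun w => ?_
      have h1 := psd_nonneg hNpsd (u + B *ᵥ w)
      have h2 := psd_nonneg hQη.posSemidef w
      nlinarith
    rw [h] at hnn
    linarith
end Defs

lemma combo {α1 α2 α3 α4 : Type*} [Finite α1] [Nonempty α1] [Finite α2] [Nonempty α2]
    [Finite α3] [Nonempty α3] [Finite α4] [Nonempty α4]
    (f1 : α1 → ℝ) (f2 : α2 → ℝ) (f3 : α3 → ℝ) (f4 : α4 → ℝ) (d1 d2 d3 : ℝ) :
    (1/2) * (⨅ s, f1 s) + (⨅ t, f2 t)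
      + ((d1 + (d2 + ((⨅ j, f3 j) + (1/2) * (⨅ l, f4 l)))) - d3)
    = ⨅ q : ((α1 × α2) × α3) × α4,
        ((1/2) * f1 q.1.1.1 + f2 q.1.1.2 + f3 q.1.2 + (1/2) * f4 q.2 + (d1 + d2 - d3)) := by
  have h2 : (0:ℝ) ≤ 1/2 := by norm_num
  rw [mul_iInf_fin _ h2 f1, mul_iInf_fin _ h2 f4]
  rw [iInf_add_iInf_fin (fun s => (1/2) * f1 s) f2]
  have hre : (⨅ q : α1 × α2, ((1/2) * f1 q.1 + f2 q.2))
      + ((d1 + (d2 + ((⨅ j, f3 j) + (⨅ l, (1/2) * f4 l)))) - d3)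
      = ((⨅ q : α1 × α2, ((1/2) * f1 q.1 + f2 q.2)) + (⨅ j, f3 j)
          + (⨅ l, (1/2) * f4 l)) + (d1 + d2 - d3) := by ring
  rw [hre, iInf_add_iInf_fin, iInf_add_iInf_fin, iInf_add_const_fin]

lemma half_aug {n : ℕ} (Q : Matrix (Fin (n + 1)) (Fin (n + 1)) ℝ) (hQ : Q.IsSymm)
    (u : Fin n → ℝ) :
    (1/2) * augQuadForm Q u = (1/2) * (u ⬝ᵥ (Q.submatrix Fin.castSucc Fin.castSucc) *ᵥ u)
      + (fun j => Q (Fin.castSucc j) (Fin.last n)) ⬝ᵥ u + Q (Fin.last n) (Fin.last n) / 2 := by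
  rw [augQuadForm_expand Q hQ]; ring


/-- Theorem 1 of the paper: if the initial value function `V₀`, the
output-related terms `−yᵀRC(x)` and `C(x)ᵀRC(x)`, and the drift-composed terms
`A(x)ᵀMA(x)` and `M̃A(x)` all admit exact min-plus quadratic expansions, then
the value function `V₁` after one dynamic-programming step again admits a
min-plus quadratic expansion. -/
theorem minplus_recursion_closure {n p m : ℕ}
    (A : (Fin n → ℝ) → (Fin n → ℝ))
    (B : Matrix (Fin n) (Fin p) ℝ)
    (C : (Fin n → ℝ) → (Fin m → ℝ))
    (R : Matrix (Fin m) (Fin m) ℝ) (hR : R.PosDef)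
    (Qη : Matrix (Fin p) (Fin p) ℝ) (hQη : Qη.PosDef)
    (y : Fin m → ℝ)
    (I₀ : Type) [Fintype I₀] [Nonempty I₀]
    (Qv0 : I₀ → Matrix (Fin (n + 1)) (Fin (n + 1)) ℝ)
    (hQv0sym : ∀ i, (Qv0 i).IsSymm)
    (hQv0psd : ∀ i, ((Qv0 i).submatrix Fin.castSucc Fin.castSucc).PosSemidef)
    (V₀ : (Fin n → ℝ) → ℝ)
    (hV₀ : ∀ x, V₀ x = ⨅ i, (1 / 2) * augQuadForm (Qv0 i) x)
    (hy : ∃ (k : ℕ) (Qc : Fin (k + 1) → Matrix (Fin (n + 1)) (Fin (n + 1)) ℝ),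
      (∀ j, (Qc j).IsSymm) ∧
        ∀ x, -(y ⬝ᵥ R.mulVec (C x)) = ⨅ j, augQuadForm (Qc j) x)
    (hc : ∃ (k : ℕ) (Qb : Fin (k + 1) → Matrix (Fin (n + 1)) (Fin (n + 1)) ℝ),
      (∀ l, (Qb l).IsSymm) ∧
        ∀ x, C x ⬝ᵥ R.mulVec (C x) = ⨅ l, augQuadForm (Qb l) x)
    (ha : ∀ M : Matrix (Fin n) (Fin n) ℝ, M.PosSemidef →
      ∃ (k : ℕ) (Qa : Fin (k + 1) → Matrix (Fin (n + 1)) (Fin (n + 1)) ℝ),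
        (∀ s, (Qa s).IsSymm) ∧
          ∀ x, A x ⬝ᵥ M.mulVec (A x) = ⨅ s, augQuadForm (Qa s) x)
    (hta : ∀ Mt : Fin n → ℝ,
      ∃ (k : ℕ) (Qta : Fin (k + 1) → Matrix (Fin (n + 1)) (Fin (n + 1)) ℝ),
        (∀ t, (Qta t).IsSymm) ∧
          ∀ x, Mt ⬝ᵥ A x = ⨅ t, augQuadForm (Qta t) x)
    (V₁ : (Fin n → ℝ) → ℝ)
    (hV₁ : ∀ x, V₁ x = ⨅ w : Fin p → ℝ,
      (V₀ (A x + B.mulVec w) + (1 / 2) * (w ⬝ᵥ Qη.mulVec w)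
        + (1 / 2) * ((y - C x) ⬝ᵥ R.mulVec (y - C x)))) :
    ∃ (k : ℕ) (Qv1 : Fin (k + 1) → Matrix (Fin (n + 1)) (Fin (n + 1)) ℝ),
      (∀ j, (Qv1 j).IsSymm) ∧
        ∀ x, V₁ x = ⨅ j, (1 / 2) * augQuadForm (Qv1 j) x := by
  classical
  obtain ⟨kc, Qc, hQcsym, hQc⟩ := hy
  obtain ⟨kb, Qb, hQbsym, hQb⟩ := hc
  have hRsym : R.IsSymm := isSymm_of_isHermitian hR.posSemidef.isHermitian
  -- Step 1: explicit minimization over w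
  have hstep : ∀ x, V₁ x = ⨅ i : I₀,
      ((1/2) * (A x ⬝ᵥ Mmat B Qη ((Qv0 i).submatrix Fin.castSucc Fin.castSucc) *ᵥ A x)
        + mvec B Qη ((Qv0 i).submatrix Fin.castSucc Fin.castSucc)
            (fun j => Qv0 i (Fin.castSucc j) (Fin.last n)) ⬝ᵥ A x
        + ((Qv0 i (Fin.last n) (Fin.last n) / 2
            + (1/2) * ((y - C x) ⬝ᵥ R *ᵥ (y - C x)))
          - (1/2) * ((fun j => Qv0 i (Fin.castSucc j) (Fin.last n))
              ⬝ᵥ Kmat B Qη ((Qv0 i).submatrix Fin.castSucc Fin.castSucc)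
              *ᵥ (fun j => Qv0 i (Fin.castSucc j) (Fin.last n))))) := by
    intro x
    set Kx : ℝ := (1/2) * ((y - C x) ⬝ᵥ R *ᵥ (y - C x)) with hKx
    rw [hV₁ x]
    have hg : ∀ w : Fin p → ℝ,
        V₀ (A x + B *ᵥ w) + (1/2) * (w ⬝ᵥ Qη *ᵥ w) + Kx
        = ⨅ i : I₀, ((1/2) * ((A x + B *ᵥ w) ⬝ᵥ ((Qv0 i).submatrix Fin.castSucc Fin.castSucc)
              *ᵥ (A x + B *ᵥ w))
            + (fun j => Qv0 i (Fin.castSucc j) (Fin.last n)) ⬝ᵥ (A x + B *ᵥ w)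
            + (1/2) * (w ⬝ᵥ Qη *ᵥ w)
            + (Qv0 i (Fin.last n) (Fin.last n) / 2 + Kx)) := by
      intro w
      rw [hV₀, iInf_add_const_fin, iInf_add_const_fin]
      refine iInf_congr' _ _ fun i => ?_
      rw [half_aug _ (hQv0sym i)]
      ring
    rw [iInf_congr' _ _ hg]
    rw [iInf_swap_fin _ (fun i =>
        ((1/2) * (A x ⬝ᵥ Mmat B Qη ((Qv0 i).submatrix Fin.castSucc Fin.castSucc) *ᵥ A x)
          + mvec B Qη ((Qv0 i).submatrix Fin.castSucc Fin.castSucc)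
              (fun j => Qv0 i (Fin.castSucc j) (Fin.last n)) ⬝ᵥ A x
          + ((Qv0 i (Fin.last n) (Fin.last n) / 2 + Kx)
            - (1/2) * ((fun j => Qv0 i (Fin.castSucc j) (Fin.last n))
                ⬝ᵥ Kmat B Qη ((Qv0 i).submatrix Fin.castSucc Fin.castSucc)
                *ᵥ (fun j => Qv0 i (Fin.castSucc j) (Fin.last n))))))
      (fun i w => (core_min' B Qη hQη _ (hQv0psd i) _ (A x)
        (Qv0 i (Fin.last n) (Fin.last n) / 2 + Kx)).1 w)]
    exact iInf_congr' _ _ fun i => (core_min' B Qη hQη _ (hQv0psd i) _ (A x)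
      (Qv0 i (Fin.last n) (Fin.last n) / 2 + Kx)).2
  -- Step 2: expansions of the drift terms
  choose ka Qa hQasym hQa using fun i : I₀ =>
    ha (Mmat B Qη ((Qv0 i).submatrix Fin.castSucc Fin.castSucc))
      (Mmat_posSemidef B Qη hQη _ (hQv0psd i))
  choose kt Qt hQtsym hQt using fun i : I₀ =>
    hta (mvec B Qη ((Qv0 i).submatrix Fin.castSucc Fin.castSucc)
      (fun j => Qv0 i (Fin.castSucc j) (Fin.last n)))
  set E : I₀ → ℝ := fun i => Qv0 i (Fin.last n) (Fin.last n) / 2 + (1/2) * (y ⬝ᵥ R *ᵥ y)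
      - (1/2) * ((fun j => Qv0 i (Fin.castSucc j) (Fin.last n))
          ⬝ᵥ Kmat B Qη ((Qv0 i).submatrix Fin.castSucc Fin.castSucc)
          *ᵥ (fun j => Qv0 i (Fin.castSucc j) (Fin.last n))) with hE
  set G : (Σ i : I₀, ((Fin (ka i + 1) × Fin (kt i + 1)) × Fin (kc + 1)) × Fin (kb + 1)) →
      Matrix (Fin (n+1)) (Fin (n+1)) ℝ := fun σ =>
    Qa σ.1 σ.2.1.1.1 + (2:ℝ) • Qt σ.1 σ.2.1.1.2 + (2:ℝ) • Qc σ.2.1.2 + Qb σ.2.2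
      + cornerMat n (2 * E σ.1) with hG
  have hGsym : ∀ σ, (G σ).IsSymm := fun σ =>
    ((((hQasym _ _).add ((hQtsym _ _).smul _)).add ((hQcsym _).smul _)).add (hQbsym _)).add
      (cornerMat_isSymm _)
  have hkey : ∀ x, V₁ x
      = ⨅ σ : (Σ i : I₀, ((Fin (ka i + 1) × Fin (kt i + 1)) × Fin (kc + 1)) × Fin (kb + 1)),
          (1/2) * augQuadForm (G σ) x := by
    intro x
    rw [hstep x, ← iInf_sigma_fin]
    refine iInf_congr' _ _ fun i => ?_
    have hKxsplit : (1/2) * ((y - C x) ⬝ᵥ R *ᵥ (y - C x))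
        = (1/2) * (y ⬝ᵥ R *ᵥ y) + ((-(y ⬝ᵥ R *ᵥ C x)) + (1/2) * (C x ⬝ᵥ R *ᵥ C x)) := by
      have hyx : C x ⬝ᵥ R *ᵥ y = y ⬝ᵥ R *ᵥ C x := dot_symm_comm R hRsym _ _
      rw [Matrix.mulVec_sub, dotProduct_sub, sub_dotProduct, sub_dotProduct, hyx]; ring
    rw [hKxsplit, hQa i x, hQt i x, hQc x, hQb x]
    rw [combo (fun s => augQuadForm (Qa i s) x) (fun t => augQuadForm (Qt i t) x)
      (fun j => augQuadForm (Qc j) x) (fun l => augQuadForm (Qb l) x) _ _ _]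
    refine iInf_congr' _ _ fun q => ?_
    rw [hG]
    simp only []
    rw [augQuadForm_add, augQuadForm_add, augQuadForm_add, augQuadForm_add,
      augQuadForm_smul, augQuadForm_smul, augQuadForm_corner, hE]
    simp only []
    ring
  -- Step 3: reindex by Fin (k+1)
  have hne : Nonempty (Σ i : I₀, ((Fin (ka i + 1) × Fin (kt i + 1)) × Fin (kc + 1))
      × Fin (kb + 1)) := ⟨⟨Classical.arbitrary I₀, ⟨⟨0, 0⟩, 0⟩, 0⟩⟩
  have hcard : Fintype.card (Σ i : I₀, ((Fin (ka i + 1) × Fin (kt i + 1)) × Fin (kc + 1))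
        × Fin (kb + 1))
      = (Fintype.card (Σ i : I₀, ((Fin (ka i + 1) × Fin (kt i + 1)) × Fin (kc + 1))
        × Fin (kb + 1)) - 1) + 1 :=
    (Nat.succ_pred_eq_of_pos Fintype.card_pos).symm
  refine ⟨_, fun j => G (((Fintype.equivFin _).trans (finCongr hcard)).symm j), ?_, ?_⟩
  · intro j; exact hGsym _
  · intro x
    rw [hkey x]
    exact (((Fintype.equivFin _).trans (finCongr hcard)).symm.surjective.iInf_comp
      (fun σ => (1/2) * augQuadForm (G σ) x)).symm
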